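/- arXiv:1403.6096 — 8 statements merged into one kernel-verified Lean document; each statement's English description precedes it below -/
import Mathlib

section
/- Let σ = (λ₁,...,λ₅) be a list of complex numbers and let g be a root of Q_σ(z) = 2z³ - 2(λ₃+λ₅)z² - (e₂(σ) + (λ₃-λ₅)²)z + e₃(σ) + e₁(σ)(λ₃²+λ₅²). Then the characteristic polynomial of the 5×5 symmetric matrix B(σ,g) equals (z-λ₁)(z-λ₂)(z-λ₃)(z-λ₄)(z-λ₅). -/
open Polynomial

/-- Principal square root of a complex number. -/
noncomputable def csqrt (z : ℂ) : ℂ := z ^ ((1 : ℂ) / 2)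

lemma csqrt_mul_self (z : ℂ) : csqrt z * csqrt z = z := by
  unfold csqrt
  rcases eq_or_ne z 0 with rfl | hz
  · rw [Complex.zero_cpow (by norm_num)]; ring
  · rw [← Complex.cpow_add _ _ hz]; norm_num

/-- The matrix pattern `B(σ, g)` of the paper. -/
noncomputable def patternB (l1 l2 l3 l4 l5 g : ℂ) : Matrix (Fin 5) (Fin 5) ℂ :=
  let e1 : ℂ := l1 + l2 + l3 + l4 + l5
  let e2 : ℂ := l1*l2+l1*l3+l1*l4+l1*l5+l2*l3+l2*l4+l2*l5+l3*l4+l3*l5+l4*l5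
  let k : ℂ := g - l3 - l5
  let l : ℂ := (g - l3) * (l5 - g)
  let m : ℂ := -g^2 + e1 * g - (1/2) * (e2 + l3^2 + l5^2)
  !![g, csqrt l, csqrt m, 0, 0;
     csqrt l, 0, 0, 0, k;
     csqrt m, 0, e1 - 2*g, csqrt m, 0;
     0, 0, csqrt m, g, csqrt l;
     0, k, 0, csqrt l, 0]

set_option maxHeartbeats 4000000 in
set_option maxRecDepth 100000 in
theorem stmt1 (l1 l2 l3 l4 l5 g : ℂ)
    (hg : 2*g^3 - 2*(l3 + l5)*g^2
        - ((l1*l2+l1*l3+l1*l4+l1*l5+l2*l3+l2*l4+l2*l5+l3*l4+l3*l5+l4*l5) + (l3 - l5)^2) * g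
        + (l1*l2*l3+l1*l2*l4+l1*l2*l5+l1*l3*l4+l1*l3*l5+l1*l4*l5+l2*l3*l4+l2*l3*l5+l2*l4*l5+l3*l4*l5)
        + (l1 + l2 + l3 + l4 + l5) * (l3^2 + l5^2) = 0) :
    (patternB l1 l2 l3 l4 l5 g).charpoly =
      (X - C l1) * (X - C l2) * (X - C l3) * (X - C l4) * (X - C l5) := by
  set a : ℂ := csqrt ((g - l3) * (l5 - g)) with hadef
  set b : ℂ := csqrt (-g^2 + (l1 + l2 + l3 + l4 + l5) * g -
      (1/2) * ((l1*l2+l1*l3+l1*l4+l1*l5+l2*l3+l2*l4+l2*l5+l3*l4+l3*l5+l4*l5) + l3^2 + l5^2)) with hbdef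
  have ha : a * a = (g - l3) * (l5 - g) := csqrt_mul_self _
  have hb2 : 2 * (b * b) = -(2*g^2) + 2*(l1 + l2 + l3 + l4 + l5) * g -
      ((l1*l2+l1*l3+l1*l4+l1*l5+l2*l3+l2*l4+l2*l5+l3*l4+l3*l5+l4*l5) + l3^2 + l5^2) := by
    rw [csqrt_mul_self]; ring
  have hB : patternB l1 l2 l3 l4 l5 g =
      !![g, a, b, 0, 0; a, 0, 0, 0, g - l3 - l5;
         b, 0, (l1 + l2 + l3 + l4 + l5) - 2*g, b, 0;
         0, 0, b, g, a; 0, g - l3 - l5, 0, a, 0] := rfl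
  rw [Matrix.charpoly, hB]
  have hcm : Matrix.charmatrix (!![g, a, b, 0, 0; a, 0, 0, 0, g - l3 - l5;
         b, 0, (l1 + l2 + l3 + l4 + l5) - 2*g, b, 0;
         0, 0, b, g, a; 0, g - l3 - l5, 0, a, 0]) =
      !![X - C g, -C a, -C b, 0, 0;
         -C a, X, 0, 0, -C (g - l3 - l5);
         -C b, 0, X - C ((l1 + l2 + l3 + l4 + l5) - 2*g), -C b, 0;
         0, 0, -C b, X - C g, -C a;
         0, -C (g - l3 - l5), 0, -C a, X] := by
    ext i j : 2
    fin_cases i <;> fin_cases j <;>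
      simp [Matrix.vecHead, Matrix.vecTail]
  rw [hcm]
  simp only [Matrix.det_succ_row_zero, Fin.sum_univ_succ, Matrix.det_fin_three,
    Matrix.submatrix_apply, Fin.succAbove, Matrix.cons_val', Matrix.cons_val_zero,
    Matrix.cons_val_one, Matrix.head_cons, Matrix.head_fin_const, Fin.sum_univ_zero,
    Matrix.cons_val_fin_one, Matrix.cons_val_succ, Matrix.empty_val',
    Fin.val_zero, Fin.val_succ, Matrix.of_apply,
    Fin.castSucc, Fin.castAdd, Fin.castLE, Fin.lt_def,
    pow_succ, pow_zero, one_mul, Fin.isValue, Matrix.cons_val]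
  norm_num
  have hg' := congrArg (C : ℂ →+* ℂ[X]) hg
  have ha' := congrArg (C : ℂ →+* ℂ[X]) ha
  have hb2' := congrArg (C : ℂ →+* ℂ[X]) hb2
  simp only [map_add, map_sub, map_mul, map_pow, map_neg, map_ofNat, map_zero, Matrix.cons_val] at hg' ha' hb2' ⊢
  linear_combination
    (2*X*C b^2 + 1*X*C a^2 + (-2)*X^3 + (-2)*C g*C b^2 + 2*C g*C a^2 + (-2)*C g*X^2 + 3*C g^2*X
      + (-2)*C g^3 + 2*C l5*C b^2 + (-1)*C l5*C a^2 + 2*C l5*X^2 + (-1)*C l5*C g*X + 3*C l5*C g^2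
      + (-1)*C l5^2*C g + (-1)*C l4*C a^2 + 2*C l4*X^2 + (-2)*C l4*C g*X + 1*C l4*C g^2
      + (-1)*C l4*C l5*C g + 2*C l3*C b^2 + (-1)*C l3*C a^2 + 2*C l3*X^2 + (-1)*C l3*C g*X
      + 3*C l3*C g^2 + (-1)*C l3*C l5*X + (-4)*C l3*C l5*C g + 1*C l3*C l5^2 + (-1)*C l3*C l4*C g
      + 1*C l3*C l4*C l5 + (-1)*C l3^2*C g + 1*C l3^2*C l5 + (-1)*C l2*C a^2 + 2*C l2*X^2
      + (-2)*C l2*C g*X + 1*C l2*C g^2 + (-1)*C l2*C l5*C g + (-1)*C l2*C l3*C g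
      + 1*C l2*C l3*C l5 + (-1)*C l1*C a^2 + 2*C l1*X^2 + (-2)*C l1*C g*X + 1*C l1*C g^2
      + (-1)*C l1*C l5*C g + (-1)*C l1*C l3*C g + 1*C l1*C l3*C l5) * ha'
    + (-X^3 + C g*X^2 - C l5*C g*X + C l5^2*X - C l3*C g*X + C l3*C l5*X + C l3*C l5*C g
      - C l3*C l5^2 + C l3^2*X - C l3^2*C l5) * hb2'
    + ((X - C l3) * (X - C l5)) * hg'
end

section
/- Let σ = (λ₁,...,λ₅) be a list of real numbers satisfying λ₁ ≥ λ₂ ≥ λ₃ ≥ λ₄ ≥ λ₅ > -λ₁, λ₁+λ₂+λ₃+λ₄+λ₅ ≥ 0, λ₃ > λ₁+λ₂+λ₃+λ₄+λ₅, and r(σ) = e₃(σ) + e₁(σ)(λ₂²+λ₅²) ≥ 0. Then u(σ) = -e₂(σ) - λ₂² - λ₅² > 0. -/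
theorem stmt2 (l1 l2 l3 l4 l5 : ℝ)
    (h12 : l1 ≥ l2) (h23 : l2 ≥ l3) (h34 : l3 ≥ l4) (h45 : l4 ≥ l5) (h5 : l5 > -l1)
    (htrace : l1 + l2 + l3 + l4 + l5 ≥ 0)
    (h3 : l3 > l1 + l2 + l3 + l4 + l5)
    (hr : (l1*l2*l3+l1*l2*l4+l1*l2*l5+l1*l3*l4+l1*l3*l5+l1*l4*l5+l2*l3*l4+l2*l3*l5+l2*l4*l5+l3*l4*l5)
        + (l1 + l2 + l3 + l4 + l5) * (l2^2 + l5^2) ≥ 0) :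
    -(l1*l2+l1*l3+l1*l4+l1*l5+l2*l3+l2*l4+l2*l5+l3*l4+l3*l5+l4*l5) - l2^2 - l5^2 > 0 := by
  have hl3 : l3 > 0 := lt_of_le_of_lt htrace h3
  have hB : l1 + l2 + l4 + l5 < 0 := by linarith
  have hA : l1 + l5 > 0 := by linarith
  have hl4 : l2 + l4 < 0 := by linarith
  have hl5 : l5 < 0 := by linarith
  nlinarith [sq_nonneg (l1+l2+l3+l4+l5), sq_nonneg (l2+l4), sq_nonneg (l1+l5), mul_pos hl3 hl3, sq_nonneg (l3+l4), sq_nonneg (l3-l2), mul_pos (sub_pos.mpr h3) hl3, mul_nonneg htrace htrace, mul_pos hA hl3, sq_nonneg (l2+l5), sq_nonneg (l1+l4)]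
end

section
/- Let σ = (λ₁,...,λ₅) be a list of real numbers satisfying λ₁ ≥ λ₂ ≥ λ₃ ≥ λ₄ ≥ λ₅ > -λ₁, e₁(σ) ≥ 0, λ₃ > e₁(σ), and r(σ) ≥ 0. Then w(σ) = λ₂λ₅e₁(σ) - λ₁λ₃λ₄ ≥ 0. -/
set_option maxHeartbeats 1000000 in
theorem stmt3 (l1 l2 l3 l4 l5 : ℝ)
    (h12 : l1 ≥ l2) (h23 : l2 ≥ l3) (h34 : l3 ≥ l4) (h45 : l4 ≥ l5) (h5 : l5 > -l1)
    (htrace : l1 + l2 + l3 + l4 + l5 ≥ 0)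
    (h3 : l3 > l1 + l2 + l3 + l4 + l5)
    (hr : (l1*l2*l3+l1*l2*l4+l1*l2*l5+l1*l3*l4+l1*l3*l5+l1*l4*l5+l2*l3*l4+l2*l3*l5+l2*l4*l5+l3*l4*l5)
        + (l1 + l2 + l3 + l4 + l5) * (l2^2 + l5^2) ≥ 0) :
    l2 * l5 * (l1 + l2 + l3 + l4 + l5) - l1 * l3 * l4 ≥ 0 := by
  have ha1 : (0:ℝ) ≤ l1 - l2 := by linarith
  have ha2 : (0:ℝ) ≤ l2 - l3 := by linarith
  have ha3 : (0:ℝ) ≤ l3 - l4 := by linarith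
  have ha4 : (0:ℝ) ≤ l4 - l5 := by linarith
  have ha5 : (0:ℝ) ≤ l1 + l5 := by linarith
  have htrace2 : (0:ℝ) ≤ l1 + l2 + l3 + l4 + l5 := htrace
  have ht : (0:ℝ) ≤ -(l1 + l2 + l4 + l5) := by linarith
  have hl3 : (0:ℝ) < l3 := by linarith
  have h0 : (0:ℝ) ≤ ((l1-l2) * ((l1+l5) * ((l1+l2+l3+l4+l5) * (-(l1+l2+l4+l5))))) := mul_nonneg ha1 (mul_nonneg ha5 (mul_nonneg htrace2 (ht)))
  have h1 : (0:ℝ) ≤ ((l4-l5) * ((l1+l5) * ((l1+l2+l3+l4+l5) * (l1+l2+l3+l4+l5)))) := mul_nonneg ha4 (mul_nonneg ha5 (mul_nonneg htrace2 (htrace2)))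
  have h2 : (0:ℝ) ≤ ((l2-l3) * ((l1+l5) * ((-(l1+l2+l4+l5)) * (-(l1+l2+l4+l5))))) := mul_nonneg ha2 (mul_nonneg ha5 (mul_nonneg ht (ht)))
  have h3 : (0:ℝ) ≤ ((l1-l2) * ((l3-l4) * ((l1+l2+l3+l4+l5) * (-(l1+l2+l4+l5))))) := mul_nonneg ha1 (mul_nonneg ha3 (mul_nonneg htrace2 (ht)))
  have h4 : (0:ℝ) ≤ ((l1-l2) * ((l1+l5) * ((l1+l2+l3+l4+l5) * (l1+l2+l3+l4+l5)))) := mul_nonneg ha1 (mul_nonneg ha5 (mul_nonneg htrace2 (htrace2)))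
  have h5 : (0:ℝ) ≤ ((l4-l5) * ((l1+l2+l3+l4+l5) * ((l1+l2+l3+l4+l5) * (-(l1+l2+l4+l5))))) := mul_nonneg ha4 (mul_nonneg htrace2 (mul_nonneg htrace2 (ht)))
  have h6 : (0:ℝ) ≤ ((l2-l3) * ((l1+l5) * ((l1+l2+l3+l4+l5) * (-(l1+l2+l4+l5))))) := mul_nonneg ha2 (mul_nonneg ha5 (mul_nonneg htrace2 (ht)))
  have h7 : (0:ℝ) ≤ ((l4-l5) * ((l1+l5) * ((-(l1+l2+l4+l5)) * (-(l1+l2+l4+l5))))) := mul_nonneg ha4 (mul_nonneg ha5 (mul_nonneg ht (ht)))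
  have h8 : (0:ℝ) ≤ ((l2-l3) * ((l4-l5) * ((l1+l2+l3+l4+l5) * (-(l1+l2+l4+l5))))) := mul_nonneg ha2 (mul_nonneg ha4 (mul_nonneg htrace2 (ht)))
  have h9 : (0:ℝ) ≤ ((l3-l4) * ((l1+l5) * ((l1+l2+l3+l4+l5) * (l1+l2+l3+l4+l5)))) := mul_nonneg ha3 (mul_nonneg ha5 (mul_nonneg htrace2 (htrace2)))
  have h10 : (0:ℝ) ≤ ((l3-l4) * ((l1+l5) * ((l1+l2+l3+l4+l5) * (-(l1+l2+l4+l5))))) := mul_nonneg ha3 (mul_nonneg ha5 (mul_nonneg htrace2 (ht)))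
  have h11 : (0:ℝ) ≤ ((l2-l3) * ((l2-l3) * ((-(l1+l2+l4+l5)) * (-(l1+l2+l4+l5))))) := mul_nonneg ha2 (mul_nonneg ha2 (mul_nonneg ht (ht)))
  have h12 : (0:ℝ) ≤ ((l1-l2) * ((l1+l5) * ((-(l1+l2+l4+l5)) * (-(l1+l2+l4+l5))))) := mul_nonneg ha1 (mul_nonneg ha5 (mul_nonneg ht (ht)))
  have h13 : (0:ℝ) ≤ ((l1-l2) * ((l2-l3) * ((-(l1+l2+l4+l5)) * (-(l1+l2+l4+l5))))) := mul_nonneg ha1 (mul_nonneg ha2 (mul_nonneg ht (ht)))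
  have h14 : (0:ℝ) ≤ ((l1+l5) * ((l1+l5) * ((l1+l2+l3+l4+l5) * (l1+l2+l3+l4+l5)))) := mul_nonneg ha5 (mul_nonneg ha5 (mul_nonneg htrace2 (htrace2)))
  have h15 : (0:ℝ) ≤ ((l2-l3) * ((l1+l5) * ((l1+l2+l3+l4+l5) * (l1+l2+l3+l4+l5)))) := mul_nonneg ha2 (mul_nonneg ha5 (mul_nonneg htrace2 (htrace2)))
  have h16 : (0:ℝ) ≤ ((l3-l4) * ((l4-l5) * ((-(l1+l2+l4+l5)) * (-(l1+l2+l4+l5))))) := mul_nonneg ha3 (mul_nonneg ha4 (mul_nonneg ht (ht)))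
  have h17 : (0:ℝ) ≤ ((l2-l3) * ((l3-l4) * ((l1+l2+l3+l4+l5) * (-(l1+l2+l4+l5))))) := mul_nonneg ha2 (mul_nonneg ha3 (mul_nonneg htrace2 (ht)))
  have h18 : (0:ℝ) ≤ ((l3-l4) * ((l3-l4) * ((-(l1+l2+l4+l5)) * (-(l1+l2+l4+l5))))) := mul_nonneg ha3 (mul_nonneg ha3 (mul_nonneg ht (ht)))
  have h19 : (0:ℝ) ≤ ((l3-l4) * ((l3-l4) * ((l1+l2+l3+l4+l5) * (-(l1+l2+l4+l5))))) := mul_nonneg ha3 (mul_nonneg ha3 (mul_nonneg htrace2 (ht)))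
  have h20 : (0:ℝ) ≤ ((l2-l3) * ((l3-l4) * ((-(l1+l2+l4+l5)) * (-(l1+l2+l4+l5))))) := mul_nonneg ha2 (mul_nonneg ha3 (mul_nonneg ht (ht)))
  have h21 : (0:ℝ) ≤ ((l1-l2) * ((l3-l4) * ((-(l1+l2+l4+l5)) * (-(l1+l2+l4+l5))))) := mul_nonneg ha1 (mul_nonneg ha3 (mul_nonneg ht (ht)))
  have h22 : (0:ℝ) ≤ ((l1-l2) * ((l1+l2+l3+l4+l5) * ((l1+l2+l3+l4+l5) * (-(l1+l2+l4+l5))))) := mul_nonneg ha1 (mul_nonneg htrace2 (mul_nonneg htrace2 (ht)))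
  have h23 : (0:ℝ) ≤ ((l3-l4) * ((l4-l5) * ((l1+l2+l3+l4+l5) * (-(l1+l2+l4+l5))))) := mul_nonneg ha3 (mul_nonneg ha4 (mul_nonneg htrace2 (ht)))
  have h24 : (0:ℝ) ≤ ((l4-l5) * ((l1+l5) * ((l1+l2+l3+l4+l5) * (-(l1+l2+l4+l5))))) := mul_nonneg ha4 (mul_nonneg ha5 (mul_nonneg htrace2 (ht)))
  have key : l3 * (l2 * l5 * (l1 + l2 + l3 + l4 + l5) - l1 * l3 * l4) = (152/225:ℝ)*((l1-l2) * ((l1+l5) * ((l1+l2+l3+l4+l5) * (-(l1+l2+l4+l5))))) + (13/25:ℝ)*((l4-l5) * ((l1+l5) * ((l1+l2+l3+l4+l5) * (l1+l2+l3+l4+l5)))) + (4/45:ℝ)*((l2-l3) * ((l1+l5) * ((-(l1+l2+l4+l5)) * (-(l1+l2+l4+l5))))) + (209/450:ℝ)*((l1-l2) * ((l3-l4) * ((l1+l2+l3+l4+l5) * (-(l1+l2+l4+l5))))) + (12/25:ℝ)*((l1-l2) * ((l1+l5) * ((l1+l2+l3+l4+l5) * (l1+l2+l3+l4+l5)))) +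 (1/9:ℝ)*((l4-l5) * ((l1+l2+l3+l4+l5) * ((l1+l2+l3+l4+l5) * (-(l1+l2+l4+l5))))) + (304/225:ℝ)*((l2-l3) * ((l1+l5) * ((l1+l2+l3+l4+l5) * (-(l1+l2+l4+l5))))) + (1/15:ℝ)*((l4-l5) * ((l1+l5) * ((-(l1+l2+l4+l5)) * (-(l1+l2+l4+l5))))) + (1/9:ℝ)*((l2-l3) * ((l4-l5) * ((l1+l2+l3+l4+l5) * (-(l1+l2+l4+l5))))) + (1/1:ℝ)*((l3-l4) * ((l1+l5) * ((l1+l2+l3+l4+l5) * (l1+l2+l3+l4+l5)))) + (61/50:ℝ)*((l3-l4) * ((l1+l5) * ((l1+l2+l3+l4+l5) * (-(l1+l2+l4+l5))))) + (2/9:ℝ)*((l2-l3) * ((l2-l3) * ((-(l1+l2+l4+l5)) * (-(l1+l2+l4+l5))))) + (4/15:ℝ)*((l1-l2) * ((l1+l5) * ((-(l1+l2+l4+l5)) * (-(l1+l2+l4+l5))))) + (1/3:ℝ)*((l1-l2) * ((l2-l3) * ((-(l1+l2+l4+l5)) * (-(l1+l2+l4+l5))))) + (1/25:ℝ)*((l1+l5)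 * ((l1+l5) * ((l1+l2+l3+l4+l5) * (l1+l2+l3+l4+l5)))) + (1/1:ℝ)*((l2-l3) * ((l1+l5) * ((l1+l2+l3+l4+l5) * (l1+l2+l3+l4+l5)))) + (4/75:ℝ)*((l3-l4) * ((l4-l5) * ((-(l1+l2+l4+l5)) * (-(l1+l2+l4+l5))))) + (1/2:ℝ)*((l2-l3) * ((l3-l4) * ((l1+l2+l3+l4+l5) * (-(l1+l2+l4+l5))))) + (6/25:ℝ)*((l3-l4) * ((l3-l4) * ((-(l1+l2+l4+l5)) * (-(l1+l2+l4+l5))))) + (1/2:ℝ)*((l3-l4) * ((l3-l4) * ((l1+l2+l3+l4+l5) * (-(l1+l2+l4+l5))))) + (121/225:ℝ)*((l2-l3) * ((l3-l4) * ((-(l1+l2+l4+l5)) * (-(l1+l2+l4+l5))))) + (46/75:ℝ)*((l1-l2) * ((l3-l4) * ((-(l1+l2+l4+l5)) * (-(l1+l2+l4+l5))))) + (1/9:ℝ)*((l1-l2) * ((l1+l2+l3+l4+l5) * ((l1+l2+l3+l4+l5) * (-(l1+l2+l4+l5))))) + (191/450:ℝ)*((l3-l4) * ((l4-l5) * ((l1+l2+l3+l4+l5)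 * (-(l1+l2+l4+l5))))) + (98/225:ℝ)*((l4-l5) * ((l1+l5) * ((l1+l2+l3+l4+l5) * (-(l1+l2+l4+l5))))) := by ring
  have hpos : (0:ℝ) ≤ l3 * (l2 * l5 * (l1 + l2 + l3 + l4 + l5) - l1 * l3 * l4) := by rw [key]; exact (add_nonneg (add_nonneg (add_nonneg (add_nonneg (add_nonneg (add_nonneg (add_nonneg (add_nonneg (add_nonneg (add_nonneg (add_nonneg (add_nonneg (add_nonneg (add_nonneg (add_nonneg (add_nonneg (add_nonneg (add_nonneg (add_nonneg (add_nonneg (add_nonneg (add_nonneg (add_nonneg (add_nonneg (mul_nonneg (by norm_num : (0:ℝ) ≤ (152/225:ℝ)) h0) (mul_nonneg (by norm_num : (0:ℝ) ≤ (13/25:ℝ)) h1)) (mul_nonneg (by norm_num : (0:ℝ) ≤ (4/45:ℝ)) h2)) (mul_nonneg (by norm_num : (0:ℝ) ≤ (209/450:ℝ)) h3)) (mul_nonneg (by norm_num : (0:ℝ) ≤ (12/25:ℝ)) h4)) (mul_nonneg (by norm_num : (0:ℝ) ≤ (1/9:ℝ)) h5)) (mul_nonneg (by norm_num : (0:ℝ)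 ≤ (304/225:ℝ)) h6)) (mul_nonneg (by norm_num : (0:ℝ) ≤ (1/15:ℝ)) h7)) (mul_nonneg (by norm_num : (0:ℝ) ≤ (1/9:ℝ)) h8)) (mul_nonneg (by norm_num : (0:ℝ) ≤ (1/1:ℝ)) h9)) (mul_nonneg (by norm_num : (0:ℝ) ≤ (61/50:ℝ)) h10)) (mul_nonneg (by norm_num : (0:ℝ) ≤ (2/9:ℝ)) h11)) (mul_nonneg (by norm_num : (0:ℝ) ≤ (4/15:ℝ)) h12)) (mul_nonneg (by norm_num : (0:ℝ) ≤ (1/3:ℝ)) h13)) (mul_nonneg (by norm_num : (0:ℝ) ≤ (1/25:ℝ)) h14)) (mul_nonneg (by norm_num : (0:ℝ) ≤ (1/1:ℝ)) h15)) (mul_nonneg (by norm_num : (0:ℝ) ≤ (4/75:ℝ)) h16)) (mul_nonneg (by norm_num : (0:ℝ) ≤ (1/2:ℝ)) h17)) (mul_nonneg (by norm_num : (0:ℝ) ≤ (6/25:ℝ)) h18)) (mul_nonneg (by norm_num : (0:ℝ) ≤ (1/2:ℝ)) h19)) (mul_nonneg (by norm_num : (0:ℝ) ≤ (121/225:ℝ))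 h20)) (mul_nonneg (by norm_num : (0:ℝ) ≤ (46/75:ℝ)) h21)) (mul_nonneg (by norm_num : (0:ℝ) ≤ (1/9:ℝ)) h22)) (mul_nonneg (by norm_num : (0:ℝ) ≤ (191/450:ℝ)) h23)) (mul_nonneg (by norm_num : (0:ℝ) ≤ (98/225:ℝ)) h24))
  exact le_of_mul_le_mul_left (by rw [mul_zero]; exact hpos) hl3
end

section
/- Let σ = (λ₁,...,λ₅) be a list of real numbers satisfying λ₁ ≥ λ₂ ≥ λ₃ ≥ λ₄ ≥ λ₅ > -λ₁, e₁(σ) ≥ 0, λ₃ > e₁(σ), and r(σ) ≥ 0. Then v(σ) = -(λ₃+λ₅)(λ₄+λ₅)(λ₂+λ₄)(λ₂+λ₃)(λ₁+λ₂)(λ₁+λ₅) > 0. -/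
theorem stmt4 (l1 l2 l3 l4 l5 : ℝ)
    (h12 : l1 ≥ l2) (h23 : l2 ≥ l3) (h34 : l3 ≥ l4) (h45 : l4 ≥ l5) (h5 : l5 > -l1)
    (htrace : l1 + l2 + l3 + l4 + l5 ≥ 0)
    (h3 : l3 > l1 + l2 + l3 + l4 + l5)
    (hr : (l1*l2*l3+l1*l2*l4+l1*l2*l5+l1*l3*l4+l1*l3*l5+l1*l4*l5+l2*l3*l4+l2*l3*l5+l2*l4*l5+l3*l4*l5)
        + (l1 + l2 + l3 + l4 + l5) * (l2^2 + l5^2) ≥ 0) :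
    -((l3 + l5) * (l4 + l5) * (l2 + l4) * (l2 + l3) * (l1 + l2) * (l1 + l5)) > 0 := by
  have hA : l1 + l5 > 0 := by linarith
  have hB : l1 + l2 > 0 := by linarith
  have hD : l2 + l3 > 0 := by linarith
  have hE : l2 + l4 < 0 := by linarith
  have hF : l3 + l5 < 0 := by linarith
  have hG : l4 + l5 < 0 := by linarith
  have key : (-(l3 + l5)) * (-(l4 + l5)) * (-(l2 + l4)) * (l2 + l3) * (l1 + l2) * (l1 + l5) > 0 :=
    mul_pos (mul_pos (mul_pos (mul_pos (mul_pos (by linarith) (by linarith)) (by linarith)) hD) hB) hA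
  nlinarith [key]
end

section
/- Let σ = (λ₁,...,λ₅) be a list of real numbers with λ₁ ≥ λ₂ ≥ λ₃ ≥ λ₄ ≥ λ₅ = -λ₁, λ₁+λ₂+λ₃+λ₄+λ₅ ≥ 0, and λ₃ > λ₁+λ₂+λ₃+λ₄+λ₅. Then there is no 5×5 nonnegative real matrix whose multiset of eigenvalues is {λ₁, λ₂, λ₃, λ₄, λ₅}. -/
open Polynomial

section helpers
open Matrix

-- eval of charpoly
lemma my_charpoly_eval {n : ℕ} (M : Matrix (Fin n) (Fin n) ℂ) (x : ℂ) :
    M.charpoly.eval x = (x • (1 : Matrix (Fin n) (Fin n) ℂ) - M).det := by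
  rw [Matrix.charpoly, eval_det, Matrix.matPolyEquiv_charmatrix]
  congr 1
  simp only [eval_sub, eval_X, eval_C]
  congr 1
  ext i j
  simp [Matrix.scalar_apply, Matrix.smul_apply, Matrix.one_apply]
  split <;> simp_all


lemma my_prod_neg (t : Multiset ℂ) (f g : ℂ → ℂ) (h : ∀ x, f x = - g x) :
    (t.map f).prod = (-1 : ℂ) ^ (Multiset.card t) * (t.map g).prod := by
  have : t.map f = (t.map g).map Neg.neg := by
    rw [Multiset.map_map]
    exact Multiset.map_congr rfl fun x _ => h x
  rw [this, Multiset.prod_map_neg, Multiset.card_map]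

lemma my_charpoly_pow {n : ℕ} (B : Matrix (Fin n) (Fin n) ℂ) (s : Multiset ℂ)
    (hcard : Multiset.card s = n)
    (hB : B.charpoly = (s.map fun a => X - C a).prod) (m : ℕ) (hm : m ≠ 0) :
    (B ^ m).charpoly = ((s.map fun a => a ^ m).map fun a => X - C a).prod := by
  apply Polynomial.funext
  intro z
  -- LHS eval
  rw [my_charpoly_eval]
  -- RHS eval
  have hRHS : (((s.map fun a => a ^ m).map fun a => X - C a).prod).eval z
      = (s.map fun a => z - a ^ m).prod := by
    simp [eval_multiset_prod, Multiset.map_map, Function.comp]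
  rw [hRHS]
  -- the polynomial X^m - C z
  set q : Polynomial ℂ := X ^ m - C z with hq
  have hq_monic : q.Monic := monic_X_pow_sub_C z hm
  have hq_splits : q.Splits := IsAlgClosed.splits q
  have hq_deg : q.natDegree = m := by
    simp [hq, natDegree_X_pow_sub_C]
  have hq_card : Multiset.card q.roots = m := by
    rw [← hq_deg]
    exact (splits_iff_card_roots.mp hq_splits)
  have hq_prod : q = (q.roots.map fun r => X - C r).prod :=
    hq_splits.eq_prod_roots_of_monic hq_monic
  -- aeval B q = B^m - z•1
  have haeval : B ^ m - z • (1 : Matrix (Fin n) (Fin n) ℂ) = Polynomial.aeval B q := by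
    simp [hq, Algebra.algebraMap_eq_smul_one]
  -- express aeval via list product
  have hlist : (Polynomial.aeval B q : Matrix (Fin n) (Fin n) ℂ)
      = ((q.roots.toList.map fun r => B - r • 1)).prod := by
    conv_lhs => rw [hq_prod]
    have : (q.roots.map fun r => X - C r).prod = (q.roots.toList.map fun r => X - C r).prod := by
      conv_lhs => rw [← Multiset.coe_toList q.roots]
      rw [Multiset.map_coe, Multiset.prod_coe]
    rw [this, map_list_prod (Polynomial.aeval B)]
    congr 1
    simp [List.map_map, Function.comp, Algebra.algebraMap_eq_smul_one]
  -- take det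
  have hdet : (B ^ m - z • (1 : Matrix (Fin n) (Fin n) ℂ)).det
      = (q.roots.map fun r => (B - r • 1).det).prod := by
    rw [haeval, hlist, ← Matrix.coe_detMonoidHom,
      map_list_prod (Matrix.detMonoidHom : Matrix (Fin n) (Fin n) ℂ →* ℂ)]
    rw [List.map_map]
    conv_rhs => rw [← Multiset.coe_toList q.roots, Multiset.map_coe, Multiset.prod_coe]
    rfl
  -- det (B - r•1) = (-1)^n * ∏_{a∈s} (r - a)
  have hfac : ∀ r : ℂ, (B - r • (1 : Matrix (Fin n) (Fin n) ℂ)).det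
      = (-1 : ℂ) ^ n * (s.map fun a => r - a).prod := by
    intro r
    have h1 : B - r • (1 : Matrix (Fin n) (Fin n) ℂ)
        = -(r • (1 : Matrix (Fin n) (Fin n) ℂ) - B) := by rw [neg_sub]
    have h2 : (r • (1 : Matrix (Fin n) (Fin n) ℂ) - B).det = (s.map fun a => r - a).prod := by
      rw [← my_charpoly_eval, hB]
      simp [eval_multiset_prod, Multiset.map_map, Function.comp]
    rw [h1, Matrix.det_neg, h2]
    simp
  -- evaluate q at a : q.eval a = a^m - z as product over roots
  have hqeval : ∀ a : ℂ, (q.roots.map fun r => a - r).prod = a ^ m - z := by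
    intro a
    have : q.eval a = a ^ m - z := by simp [hq]
    rw [← this]
    conv_rhs => rw [hq_prod]
    simp [eval_multiset_prod, Multiset.map_map, Function.comp]
  -- now assemble
  have hmain : (z • (1 : Matrix (Fin n) (Fin n) ℂ) - B ^ m).det
      = (s.map fun a => z - a ^ m).prod := by
    have hneg : z • (1 : Matrix (Fin n) (Fin n) ℂ) - B ^ m = -(B ^ m - z • 1) := by rw [neg_sub]
    rw [hneg, Matrix.det_neg, hdet]
    have e1 : (q.roots.map fun r => (B - r • (1 : Matrix (Fin n) (Fin n) ℂ)).det).prod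
        = (q.roots.map fun r => (-1 : ℂ) ^ n * (s.map fun a => r - a).prod).prod := by
      congr 1
      exact Multiset.map_congr rfl fun r _ => hfac r
    rw [e1, Multiset.prod_map_mul]
    have e2 : (q.roots.map fun _ => (-1 : ℂ) ^ n).prod = ((-1 : ℂ) ^ n) ^ m := by
      simp [Multiset.map_const', Multiset.prod_replicate, hq_card]
    have e3 : (q.roots.map fun r => (s.map fun a => r - a).prod).prod
        = (s.map fun a => (q.roots.map fun r => r - a).prod).prod :=
      Multiset.prod_map_prod_map q.roots s
    have e4 : (s.map fun a => (q.roots.map fun r => r - a).prod).prod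
        = (s.map fun a => (-1 : ℂ) ^ m * (a ^ m - z)).prod := by
      congr 1
      refine Multiset.map_congr rfl fun a _ => ?_
      rw [← hqeval a, ← hq_card]
      exact my_prod_neg _ _ _ (fun r => by ring)
    have e5 : (s.map fun a => (-1 : ℂ) ^ m * (a ^ m - z)).prod
        = ((-1 : ℂ) ^ m) ^ n * (s.map fun a => a ^ m - z).prod := by
      rw [Multiset.prod_map_mul]
      simp [Multiset.map_const', Multiset.prod_replicate, hcard]
    have e6 : (s.map fun a => z - a ^ m).prod
        = ((-1 : ℂ)) ^ n * (s.map fun a => a ^ m - z).prod := by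
      rw [← hcard]
      exact my_prod_neg _ _ _ (fun a => by ring)
    rw [e3, e4, e5, e6, e2]
    simp only [Fintype.card_fin, ← pow_mul]
    rw [← mul_assoc, ← mul_assoc, ← pow_add, ← pow_add]
    rw [show n + n * m + m * n = 2 * (n * m) + n by ring, pow_add, pow_mul]
    simp [mul_assoc]
  rw [hmain]

lemma my_trace_pow {n : ℕ} (A : Matrix (Fin n) (Fin n) ℝ) (s : Multiset ℝ)
    (hcard : Multiset.card s = n)
    (hA : A.charpoly = (s.map fun a => X - C a).prod) (m : ℕ) (hm : m ≠ 0) :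
    (A ^ m).trace = (s.map fun a => a ^ m).sum := by
  set f : ℝ →+* ℂ := algebraMap ℝ ℂ with hf
  set B : Matrix (Fin n) (Fin n) ℂ := A.map f with hBdef
  have hBchar : B.charpoly = ((s.map f).map fun a => X - C a).prod := by
    rw [hBdef, Matrix.charpoly_map, hA, ← Polynomial.coe_mapRingHom,
      map_multiset_prod]
    simp [Multiset.map_map, Function.comp]
  have hBm := my_charpoly_pow B (s.map f) (by simp [hcard]) hBchar m hm
  have htr : (B ^ m).trace = (((s.map f).map fun a => a ^ m).map fun a => a).sum := by
    rw [Matrix.trace_eq_sum_roots_charpoly, hBm, roots_multiset_prod_X_sub_C]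
    simp
  have hBpow : B ^ m = (A ^ m).map f := by
    rw [hBdef, ← RingHom.mapMatrix_apply, ← RingHom.mapMatrix_apply, ← map_pow]
  have htrmap : ((A ^ m).map f).trace = f ((A ^ m).trace) := by
    simp [Matrix.trace, Matrix.diag, map_sum]
  rw [hBpow, htrmap] at htr
  have hrhs : (((s.map f).map fun a => a ^ m).map fun a => a).sum
      = f ((s.map fun a => a ^ m).sum) := by
    rw [map_multiset_sum]
    simp [Multiset.map_map, Function.comp]
  rw [hrhs] at htr
  have : Function.Injective f := by
    rw [hf]
    exact fun a b h => by exact_mod_cast h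
  exact this htr

end helpers

theorem stmt6 (l1 l2 l3 l4 l5 : ℝ)
    (h12 : l1 ≥ l2) (h23 : l2 ≥ l3) (h34 : l3 ≥ l4) (h45 : l4 ≥ l5) (h5 : l5 = -l1)
    (htrace : l1 + l2 + l3 + l4 + l5 ≥ 0)
    (h3 : l3 > l1 + l2 + l3 + l4 + l5) :
    ¬ ∃ A : Matrix (Fin 5) (Fin 5) ℝ, (∀ i j, 0 ≤ A i j) ∧
      A.charpoly = (X - C l1) * (X - C l2) * (X - C l3) * (X - C l4) * (X - C l5) := by
  rintro ⟨A, hpos, hchar⟩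
  -- basic inequalities
  have hl3 : 0 < l3 := lt_of_le_of_lt htrace h3
  have hl2 : 0 < l2 := lt_of_lt_of_le hl3 h23
  have hl4 : l4 < -l2 := by linarith [h3, h5]
  set r : ℝ := -l4 with hr
  have hrl2 : l2 < r := by simp [hr]; linarith
  -- multiset form of charpoly
  set s : Multiset ℝ := ↑[l1, l2, l3, l4, l5] with hs
  have hcard : Multiset.card s = 5 := by simp [hs]
  have hA : A.charpoly = (s.map fun a => X - C a).prod := by
    rw [hchar, hs, Multiset.map_coe, Multiset.prod_coe]
    simp [List.prod]
    ring
  -- entries of powers are nonnegative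
  have hposm : ∀ m : ℕ, ∀ i j, 0 ≤ (A ^ (m + 1)) i j := by
    intro m
    induction m with
    | zero => simpa using hpos
    | succ k ih =>
      intro i j
      rw [pow_succ, Matrix.mul_apply]
      exact Finset.sum_nonneg fun c _ => mul_nonneg (ih i c) (hpos c j)
  have htracepos : ∀ m : ℕ, 0 ≤ (A ^ (m + 1)).trace := by
    intro m
    exact Finset.sum_nonneg fun i _ => hposm m i i
  -- choose large odd power
  obtain ⟨k, hk⟩ := pow_unbounded_of_one_lt (2 : ℝ) ((one_lt_div hl2).mpr hrl2)
  set m : ℕ := 2 * k + 1 with hm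
  have hmodd : Odd m := ⟨k, by ring⟩
  have hge : (2 : ℝ) < (r / l2) ^ m := by
    refine lt_of_lt_of_le hk ?_
    apply pow_le_pow_right₀
    · rw [le_div_iff₀ hl2]; linarith
    · omega
  have hrm : 2 * l2 ^ m < r ^ m := by
    rw [div_pow] at hge
    have := (lt_div_iff₀ (by positivity : (0:ℝ) < l2 ^ m)).mp hge
    linarith
  -- compute the trace
  have htr := my_trace_pow A s hcard hA m (by omega)
  have hsum : (s.map fun a => a ^ m).sum = l2 ^ m + l3 ^ m - r ^ m := by
    rw [hs, Multiset.map_coe, Multiset.sum_coe]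
    simp [List.sum]
    rw [h5, hmodd.neg_pow, hr]
    have : l4 = -r := by simp [hr]
    rw [this, hmodd.neg_pow]
    ring
  have h0 : 0 ≤ (A ^ m).trace := by
    have := htracepos (2 * k)
    simpa [hm] using this
  rw [htr, hsum] at h0
  have hl3m : l3 ^ m ≤ l2 ^ m := pow_le_pow_left₀ (le_of_lt hl3) h23 m
  linarith
end

section
/- Let λ₁ ≥ λ₂ ≥ λ₃ ≥ λ₄ ≥ λ₅ ≥ -λ₁ be real numbers with e₁ ≥ 0 and λ₃ > e₁, where e₁ = λ₁+...+λ₅. Then the discriminant Δ = e₁² - 2(e₂ + λ₃² + λ₅²) of the quadratic m(z) = -z² + e₁z - (1/2)(e₂+λ₃²+λ₅²) satisfies Δ ≥ λ₂² > 0, and m(z) ≥ 0 for every z with 0 ≤ z ≤ e₁/2. -/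
theorem stmt8 (l1 l2 l3 l4 l5 : ℝ)
    (h12 : l1 ≥ l2) (h23 : l2 ≥ l3) (h34 : l3 ≥ l4) (h45 : l4 ≥ l5) (h5 : l5 ≥ -l1)
    (he1 : l1 + l2 + l3 + l4 + l5 ≥ 0)
    (h3 : l3 > l1 + l2 + l3 + l4 + l5) :
    ((l1 + l2 + l3 + l4 + l5)^2
      - 2 * ((l1*l2+l1*l3+l1*l4+l1*l5+l2*l3+l2*l4+l2*l5+l3*l4+l3*l5+l4*l5) + l3^2 + l5^2)
      ≥ l2^2 ∧ l2^2 > 0) ∧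
    ∀ z : ℝ, 0 ≤ z → z ≤ (l1 + l2 + l3 + l4 + l5) / 2 →
      -z^2 + (l1 + l2 + l3 + l4 + l5) * z
        - (1/2) * ((l1*l2+l1*l3+l1*l4+l1*l5+l2*l3+l2*l4+l2*l5+l3*l4+l3*l5+l4*l5) + l3^2 + l5^2)
      ≥ 0 := by
  have hsum : l1 + l2 + l4 + l5 < 0 := by linarith
  have h15 : l1 + l5 ≥ 0 := by linarith
  have h4neg : l3 + l4 < 0 := by linarith
  have hA : (l1 - l5) * (l1 + l5) ≥ 0 := mul_nonneg (by linarith) h15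
  have hB : (l3 - l4) * (-(l3 + l4)) ≥ 0 := mul_nonneg (by linarith) (by linarith)
  have hDelta : (l1 + l2 + l3 + l4 + l5)^2
      - 2 * ((l1*l2+l1*l3+l1*l4+l1*l5+l2*l3+l2*l4+l2*l5+l3*l4+l3*l5+l4*l5) + l3^2 + l5^2)
      ≥ l2^2 := by nlinarith [hA, hB]
  have hl2 : l2 > 0 := by linarith
  refine ⟨⟨hDelta, by positivity⟩, ?_⟩
  intro z hz hz2
  have he2 : (l1 + l2 + l3 + l4 + l5)^2 ≤ l2^2 := by
    nlinarith [he1, hl2]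
  have hc : (l1*l2+l1*l3+l1*l4+l1*l5+l2*l3+l2*l4+l2*l5+l3*l4+l3*l5+l4*l5) + l3^2 + l5^2 ≤ 0 := by
    nlinarith [hDelta, he2]
  nlinarith [mul_nonneg hz (by linarith : (l1 + l2 + l3 + l4 + l5) - z ≥ 0), hc]
end

section
/- Let σ = (λ₁,...,λ₅) be real numbers with λ₁ ≥ λ₂ ≥ λ₃ ≥ λ₄ ≥ λ₅ > -λ₁, e₁(σ) ≥ 0, λ₃ > e₁(σ), r(σ) = 0, and u(σ) > 0. Then λ₂ + λ₃ + λ₅ < 0. -/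
theorem stmt13 (l1 l2 l3 l4 l5 : ℝ)
    (h12 : l1 ≥ l2) (h23 : l2 ≥ l3) (h34 : l3 ≥ l4) (h45 : l4 ≥ l5) (h5 : l5 > -l1)
    (he1 : l1 + l2 + l3 + l4 + l5 ≥ 0)
    (h3 : l3 > l1 + l2 + l3 + l4 + l5)
    (hr : (l1*l2*l3+l1*l2*l4+l1*l2*l5+l1*l3*l4+l1*l3*l5+l1*l4*l5+l2*l3*l4+l2*l3*l5+l2*l4*l5+l3*l4*l5)
        + (l1 + l2 + l3 + l4 + l5) * (l2^2 + l5^2) = 0)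
    (hu : -(l1*l2+l1*l3+l1*l4+l1*l5+l2*l3+l2*l4+l2*l5+l3*l4+l3*l5+l4*l5) - l2^2 - l5^2 > 0) :
    l2 + l3 + l5 < 0 := by
  by_contra hc
  push_neg at hc
  have hA : (0:ℝ) < l1 + l5 := by linarith
  have hB : (0:ℝ) < -(l1 + l2 + l4 + l5) := by linarith
  have hD1 : (0:ℝ) ≤ l1 - l2 := by linarith
  have hD2 : (0:ℝ) ≤ l2 - l3 := by linarith
  have hD3 : (0:ℝ) ≤ l3 - l4 := by linarith
  have hD4 : (0:ℝ) ≤ l4 - l5 := by linarith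
  have hS : (0:ℝ) ≤ l2 + l3 + l5 := hc
  nlinarith [hr, mul_pos (mul_pos hA hA) hB, mul_pos (mul_pos hA hB) hB,
    mul_nonneg (mul_pos hA hB).le he1, mul_nonneg (mul_pos hA hB).le hS,
    mul_nonneg (mul_nonneg hA.le hD1) hS, mul_nonneg (mul_nonneg hA.le hD2) hS,
    mul_nonneg (mul_nonneg hA.le he1) hS, mul_pos (mul_pos hB hB) hB,
    mul_nonneg (mul_pos hB hB).le hD4, mul_nonneg (mul_nonneg hB.le hD1) hD4,
    mul_nonneg (mul_nonneg hB.le hD1) hS, mul_nonneg (mul_nonneg hB.le hD2) hD3,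
    mul_nonneg (mul_nonneg hB.le hD2) hD4, mul_nonneg (mul_nonneg hB.le hD3) hD4,
    mul_nonneg (mul_nonneg hB.le hD3) hS]
end

section
/- Fix i ∈ {2,...,n}. Suppose that for every real list σ = (λ₁,...,λₙ) realizable as the spectrum of a symmetric nonnegative matrix with Perron eigenvalue λ₁, there exists s₀ > 0 such that σᵢ^{-s} (replace λ₁ by λ₁+s and λᵢ by λᵢ-s) is realizable by a symmetric nonnegative matrix with Perron eigenvalue λ₁+s for all 0 ≤ s < s₀. Then σᵢ^{-s} is realizable by a symmetric nonnegative matrix for every s > 0. -/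
open Polynomial

/-- `μ` is the spectrum of an `n×n` symmetric nonnegative matrix. -/
def SymRealizable {n : ℕ} (μ : Fin n → ℝ) : Prop :=
  ∃ A : Matrix (Fin n) (Fin n) ℝ, A.IsSymm ∧ (∀ i j, 0 ≤ A i j) ∧
    A.charpoly = ∏ j, (X - C (μ j))

/-- `μ` is the spectrum of an `n×n` symmetric nonnegative matrix with Perron
eigenvalue `μ 0`. -/
def SymRealizablePerron {n : ℕ} [NeZero n] (μ : Fin n → ℝ) : Prop :=
  SymRealizable μ ∧ ∀ j, |μ j| ≤ μ 0


lemma eval_charpoly' {n : ℕ} (M : Matrix (Fin n) (Fin n) ℝ) (x : ℝ) :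
    M.charpoly.eval x = (Matrix.scalar (Fin n) x - M).det := by
  rw [Matrix.charpoly, eval_det, Matrix.matPolyEquiv_charmatrix]
  simp

-- eigenvalues are roots of charpoly
lemma eig_is_root {n : ℕ} {A : Matrix (Fin n) (Fin n) ℝ} (hA : A.IsHermitian) (k : Fin n) :
    A.charpoly.eval (hA.eigenvalues k) = 0 := by
  have h := hA.eigenvalues_mem_spectrum_real k
  rw [spectrum.mem_iff] at h
  rw [eval_charpoly']
  by_contra hdet
  exact h ((Matrix.isUnit_iff_isUnit_det _).2 (isUnit_iff_ne_zero.2 (by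
    simpa [Matrix.scalar, Algebra.algebraMap_eq_smul_one] using hdet)))

lemma isHermitian_of_isSymm {n : ℕ} {A : Matrix (Fin n) (Fin n) ℝ} (h : A.IsSymm) :
    A.IsHermitian := by
  ext i j
  simp only [Matrix.conjTranspose_apply, star_trivial]
  exact congrFun (congrFun h i) j

lemma entry_bound {n : ℕ} {A : Matrix (Fin n) (Fin n) ℝ} {R : ℝ} (hR : 0 ≤ R)
    (hA : A.IsHermitian) (heig : ∀ k, |hA.eigenvalues k| ≤ R) (i j : Fin n) :
    |A i j| ≤ R := by
  set U : Matrix (Fin n) (Fin n) ℝ := (hA.eigenvectorUnitary : Matrix (Fin n) (Fin n) ℝ) with hU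
  have hrow : ∀ p : Fin n, ∑ k, (U p k)^2 = 1 := by
    intro p
    have h1 : U * star U = 1 := Matrix.mem_unitaryGroup_iff.mp hA.eigenvectorUnitary.2
    have := congrFun (congrFun h1 p) p
    simpa [Matrix.mul_apply, sq] using this
  have hspec := hA.spectral_theorem
  have hAij : A i j = ∑ k, U i k * hA.eigenvalues k * U j k := by
    conv_lhs => rw [hspec]
    simp [Matrix.mul_apply, Matrix.diagonal_apply, Finset.sum_ite_eq, Matrix.conjTranspose_apply,
      hU, Matrix.IsHermitian.eigenvectorUnitary_apply]
  rw [hAij]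
  calc |∑ k, U i k * hA.eigenvalues k * U j k| ≤ ∑ k, |U i k * hA.eigenvalues k * U j k| :=
        Finset.abs_sum_le_sum_abs _ _
    _ ≤ ∑ k, R * (|U i k| * |U j k|) := by
        apply Finset.sum_le_sum
        intro k _
        rw [abs_mul, abs_mul]
        calc |U i k| * |hA.eigenvalues k| * |U j k|
            ≤ |U i k| * R * |U j k| := by
              have h1 := abs_nonneg (U i k); have h2 := abs_nonneg (U j k)
              have h3 := heig k; have h4 := abs_nonneg (hA.eigenvalues k)
              nlinarith [mul_nonneg (sub_nonneg.2 h3) (mul_nonneg h1 h2)]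
          _ = R * (|U i k| * |U j k|) := by ring
    _ = R * ∑ k, |U i k| * |U j k| := by rw [Finset.mul_sum]
    _ ≤ R * 1 := by
        apply mul_le_mul_of_nonneg_left _ hR
        have hcs := Finset.sum_mul_sq_le_sq_mul_sq Finset.univ (fun k => |U i k|) (fun k => |U j k|)
        have h1 : (∑ k, |U i k| ^ 2) = 1 := by simpa [sq_abs] using hrow i
        have h2 : (∑ k, |U j k| ^ 2) = 1 := by simpa [sq_abs] using hrow j
        rw [h1, h2, one_mul] at hcs
        nlinarith [Finset.sum_nonneg (fun k (_ : k ∈ Finset.univ) => mul_nonneg (abs_nonneg (U i k)) (abs_nonneg (U j k)))]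
    _ = R := mul_one R

open Filter in
lemma closed_limit {n : ℕ} [NeZero n] (μs : ℕ → Fin n → ℝ) (μ : Fin n → ℝ)
    (hreal : ∀ k, SymRealizablePerron (μs k))
    (hconv : ∀ j, Tendsto (fun k => μs k j) atTop (nhds (μ j))) :
    SymRealizablePerron μ := by
  have hperron : ∀ j, |μ j| ≤ μ 0 := fun j =>
    le_of_tendsto_of_tendsto' ((continuous_abs.tendsto _).comp (hconv j)) (hconv 0)
      (fun k => (hreal k).2 j)
  -- uniform bound
  obtain ⟨M, hM⟩ := (hconv 0).bddAbove_range
  have hMb : ∀ k, μs k 0 ≤ M := fun k => hM (Set.mem_range_self k)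
  have hM0 : 0 ≤ M := le_trans (le_trans (abs_nonneg _) ((hreal 0).2 0)) (hMb 0)
  choose A hsymm hpos hcp using fun k => (hreal k).1
  -- entries bounded
  have hbd : ∀ k i j, A k i j ∈ Set.Icc (-M) M := by
    intro k i j
    have hH := isHermitian_of_isSymm (hsymm k)
    have heig : ∀ l, |hH.eigenvalues l| ≤ M := by
      intro l
      have hroot := eig_is_root hH l
      rw [hcp k] at hroot
      simp only [eval_prod, eval_sub, eval_X, eval_C, Finset.prod_eq_zero_iff] at hroot
      obtain ⟨j', -, hj'⟩ := hroot
      have : hH.eigenvalues l = μs k j' := by linarith [sub_eq_zero.mp hj']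
      rw [this]
      exact le_trans ((hreal k).2 j') (hMb k)
    have := entry_bound hM0 hH heig i j
    exact ⟨(abs_le.mp this).1, (abs_le.mp this).2⟩
  -- compactness
  have hcpt : IsCompact (Set.univ.pi fun _ : Fin n => Set.univ.pi fun _ : Fin n =>
      Set.Icc (-M) M : Set (Matrix (Fin n) (Fin n) ℝ)) :=
    isCompact_univ_pi fun _ => isCompact_univ_pi fun _ => isCompact_Icc
  have hcpt' : IsCompact (Set.univ.pi fun _ : Fin n => Set.univ.pi fun _ : Fin n =>
      Set.Icc (-M) M : Set (Fin n → Fin n → ℝ)) :=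
    isCompact_univ_pi fun _ => isCompact_univ_pi fun _ => isCompact_Icc
  obtain ⟨B', -, φ, hφ, hB'⟩ := hcpt'.tendsto_subseq (x := fun k i j => A k i j)
    (fun k => by simp only [Set.mem_pi, Set.mem_univ, forall_true_left]; exact fun i j => hbd k i j)
  set B : Matrix (Fin n) (Fin n) ℝ := Matrix.of B' with hBdef
  have hB : Filter.Tendsto (fun k => A (φ k)) atTop (nhds B) := hB'
  have hBentry : ∀ i j, Tendsto (fun k => A (φ k) i j) atTop (nhds (B i j)) := by
    intro i j
    exact tendsto_pi_nhds.1 (tendsto_pi_nhds.1 hB i) j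
  have hφt : Tendsto φ atTop atTop := hφ.tendsto_atTop
  refine ⟨⟨B, ?_, ?_, ?_⟩, hperron⟩
  · ext i j
    have h1 := hBentry i j
    have h2 := hBentry j i
    have h3 : ∀ k, A (φ k) i j = A (φ k) j i := fun k => ((hsymm (φ k)).apply i j).symm
    simp only [Matrix.transpose_apply]
    exact tendsto_nhds_unique (by simpa only [← h3] using h2) h1
  · intro i j
    exact le_of_tendsto_of_tendsto' tendsto_const_nhds (hBentry i j) (fun k => hpos _ i j)
  · apply Polynomial.funext
    intro x
    rw [eval_charpoly']
    have hd : Tendsto (fun k => (Matrix.scalar (Fin n) x - A (φ k)).det) atTop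
        (nhds ((Matrix.scalar (Fin n) x - B).det)) :=
      ((continuous_const.sub continuous_id).matrix_det.tendsto _).comp hB
    have hp : Tendsto (fun k => ∏ j, (x - μs (φ k) j)) atTop (nhds (∏ j, (x - μ j))) :=
      tendsto_finset_prod _ fun j _ => tendsto_const_nhds.sub ((hconv j).comp hφt)
    have heq : ∀ k, (Matrix.scalar (Fin n) x - A (φ k)).det = ∏ j, (x - μs (φ k) j) := by
      intro k
      rw [← eval_charpoly', hcp (φ k)]
      simp [eval_prod]
    rw [show (∏ j, (X - C (μ j)) : ℝ[X]).eval x = ∏ j, (x - μ j) by simp [eval_prod]]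
    exact tendsto_nhds_unique hd (by simpa only [heq] using hp)


open Filter in
theorem stmt18 {n : ℕ} [NeZero n] (i : Fin n) (hi : i ≠ 0)
    (H : ∀ σ : Fin n → ℝ, SymRealizablePerron σ →
      ∃ s₀ > 0, ∀ s : ℝ, 0 ≤ s → s < s₀ →
        SymRealizablePerron (Function.update (Function.update σ 0 (σ 0 + s)) i (σ i - s)))
    (σ : Fin n → ℝ) (hσ : SymRealizablePerron σ) (s : ℝ) (hs : 0 < s) :
    SymRealizable (Function.update (Function.update σ 0 (σ 0 + s)) i (σ i - s)) := by
  set f : ℝ → Fin n → ℝ := fun t =>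
    Function.update (Function.update σ 0 (σ 0 + t)) i (σ i - t) with hf
  have hfapp : ∀ t j, f t j = if j = i then σ i - t else if j = 0 then σ 0 + t else σ j := by
    intro t j
    rcases eq_or_ne j i with rfl | hji
    · simp [hf]
    · rcases eq_or_ne j 0 with rfl | hj0
      · simp [hf, Function.update_of_ne hji, Function.update_self, Ne.symm hi, hi]
      · simp [hf, Function.update_of_ne hji, Function.update_of_ne hj0, hji, hj0]
  have hf0 : f 0 = σ := by
    funext j; rw [hfapp]
    split_ifs with h1 h2
    · rw [h1]; ring
    · rw [h2]; ring
    · rfl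
  have hfadd : ∀ t u : ℝ,
      Function.update (Function.update (f t) 0 (f t 0 + u)) i (f t i - u) = f (t + u) := by
    intro t u
    funext j
    rcases eq_or_ne j i with rfl | hji
    · rw [Function.update_self, hfapp, hfapp]; simp; ring
    · rw [Function.update_of_ne hji]
      rcases eq_or_ne j 0 with rfl | hj0
      · rw [Function.update_self, hfapp, hfapp,
          if_neg (Ne.symm hi), if_neg (Ne.symm hi), if_pos rfl, if_pos rfl]
        ring
      · rw [Function.update_of_ne hj0, hfapp, hfapp, if_neg hji, if_neg hji, if_neg hj0, if_neg hj0]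
  -- main claim
  have main : ∀ t : ℝ, 0 ≤ t → SymRealizablePerron (f t) := by
    by_contra hbad
    push_neg at hbad
    set bad : Set ℝ := {t | 0 ≤ t ∧ ¬ SymRealizablePerron (f t)} with hbaddef
    have hbadne : bad.Nonempty := by
      obtain ⟨t, ht, hnt⟩ := hbad; exact ⟨t, ht, hnt⟩
    have hbdd : BddBelow bad := ⟨0, fun t ht => ht.1⟩
    set c := sInf bad with hc
    have hc0 : 0 ≤ c := le_csInf hbadne fun t ht => ht.1
    have hgood : ∀ t, 0 ≤ t → t < c → SymRealizablePerron (f t) := by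
      intro t ht htc
      by_contra hnt
      exact absurd (csInf_le hbdd ⟨ht, hnt⟩) (not_le.2 htc)
    have hPc : SymRealizablePerron (f c) := by
      rcases eq_or_lt_of_le hc0 with heq | hcpos
      · rwa [← heq, hf0]
      · set tk : ℕ → ℝ := fun k => c - c / (k + 1) with htk
        have htk0 : ∀ k, 0 ≤ tk k := by
          intro k
          have h1 : c / (k + 1) ≤ c := div_le_self hcpos.le (by
            have : (0:ℝ) ≤ (k:ℝ) := Nat.cast_nonneg k
            linarith)
          simp only [htk, sub_nonneg]
          exact h1
        have htklt : ∀ k, tk k < c := by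
          intro k
          have : 0 < c / (k + 1) := div_pos hcpos (by positivity)
          simp [htk]; linarith
        have htend : Tendsto tk atTop (nhds c) := by
          have h1 : Tendsto (fun k : ℕ => c / (k + 1)) atTop (nhds 0) := by
            apply Tendsto.div_atTop tendsto_const_nhds
            exact tendsto_atTop_add_const_right _ _ tendsto_natCast_atTop_atTop
          simpa using tendsto_const_nhds.sub h1
        refine closed_limit (fun k => f (tk k)) (f c) (fun k => hgood _ (htk0 k) (htklt k)) ?_
        intro j
        have hcont : Continuous fun t : ℝ => f t j := by
          simp only [hfapp]
          split_ifs
          · exact continuous_const.sub continuous_id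
          · exact continuous_const.add continuous_id
          · exact continuous_const
        exact (hcont.tendsto c).comp htend
    obtain ⟨s₀, hs₀, hstep⟩ := H (f c) hPc
    have hlow : ∀ t ∈ bad, c + s₀ ≤ t := by
      intro t ht
      by_contra hlt
      push_neg at hlt
      rcases lt_or_ge t c with h | h
      · exact ht.2 (hgood t ht.1 h)
      · have := hstep (t - c) (by linarith) (by linarith)
        rw [hfadd, add_sub_cancel] at this
        exact ht.2 this
    have := le_csInf hbadne hlow
    rw [← hc] at this
    linarith
  exact (main s hs.le).1
end
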